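/- Fuzzy subgraph connectivity need not be transitive: there exists a fuzzy graph G with pairwise disjoint proper induced fuzzy subgraphs H1, H2, H3 and a value t such that CONN_G(H1,H2) = t and CONN_G(H2,H3) = t, but CONN_G(H1,H3) ≠ t. -/

import Mathlib

/-- A fuzzy graph on vertex set `V`: vertex memberships `sigma` and symmetric
edge memberships `mu` with `mu u v ≤ min (sigma u) (sigma v)`. -/
structure FuzzyGraph (V : Type*) where
  sigma : V → ℝ
  mu : V → V → ℝ
  sigma_nonneg : ∀ v, 0 ≤ sigma v
  sigma_le_one : ∀ v, sigma v ≤ 1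
  mu_nonneg : ∀ u v, 0 ≤ mu u v
  mu_symm : ∀ u v, mu u v = mu v u
  mu_le : ∀ u v, mu u v ≤ min (sigma u) (sigma v)

variable {V : Type*}

/-- Strength of a path given as a list of vertices: the minimum of the edge
memberships along consecutive pairs (with neutral value 1). -/
def pathStrength (μ : V → V → ℝ) (l : List V) : ℝ :=
  ((l.zip l.tail).map fun p => μ p.1 p.2).foldr min 1

/-- `l` is a walk from `u` to `v` in the fuzzy graph with edge function `μ`:
all consecutive memberships are positive, and `l` has at least one edge. -/
def IsWalk (μ : V → V → ℝ) (u v : V) (l : List V) : Prop :=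
  l.Chain' (fun a b => 0 < μ a b) ∧ l.head? = some u ∧ l.getLast? = some v ∧ 2 ≤ l.length

/-- Max–min connectivity between two vertices: supremum of path strengths. -/
noncomputable def conn (μ : V → V → ℝ) (u v : V) : ℝ :=
  sSup {s | ∃ l, IsWalk μ u v l ∧ pathStrength μ l = s}

/-- Connectivity from a vertex `x` to a subgraph with vertex set `S`. -/
noncomputable def connVS (μ : V → V → ℝ) (x : V) (S : Set V) : ℝ :=
  sSup {s | ∃ u ∈ S, conn μ x u = s}

/-- Connectivity between two subgraphs with vertex sets `S1`, `S2`. -/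
noncomputable def connSS (μ : V → V → ℝ) (S1 S2 : Set V) : ℝ :=
  sSup {s | ∃ u ∈ S1, ∃ v ∈ S2, conn μ u v = s}

lemma foldr_min_le_one (L : List ℝ) : L.foldr min 1 ≤ 1 := by
  induction L with
  | nil => simp
  | cons a t ih => exact le_trans (min_le_right _ _) ih

lemma foldr_min_le_mem {L : List ℝ} {x : ℝ} (h : x ∈ L) : L.foldr min 1 ≤ x := by
  induction L with
  | nil => simp at h
  | cons a t ih =>
    rcases List.mem_cons.1 h with h | h
    · subst h; exact min_le_left _ _
    · exact le_trans (min_le_right _ _) (ih h)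

lemma chain'_zip {R : V → V → Prop} :
    ∀ {l : List V}, l.Chain' R → ∀ p ∈ l.zip l.tail, R p.1 p.2 := by
  intro l
  induction l with
  | nil => intro _ p hp; simp at hp
  | cons a t ih =>
    cases t with
    | nil => intro _ p hp; simp at hp
    | cons b s =>
      intro h p hp
      rw [List.Chain', List.isChain_cons_cons] at h
      simp only [List.tail_cons, List.zip_cons_cons, List.mem_cons] at hp
      rcases hp with hp | hp
      · subst hp; exact h.1
      · exact ih h.2 p hp

lemma exists_last_pair :
    ∀ (l : List V) (v : V), l.getLast? = some v → 2 ≤ l.length →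
      ∃ a, (a, v) ∈ l.zip l.tail := by
  intro l
  induction l with
  | nil => intro v h hl; simp at hl
  | cons a t ih =>
    cases t with
    | nil => intro v h hl; simp at hl
    | cons b s =>
      intro v h hl
      cases s with
      | nil =>
        refine ⟨a, ?_⟩
        simp_all [List.getLast?]
      | cons c r =>
        have h' : (b :: c :: r).getLast? = some v := by
          rw [List.getLast?_cons_cons] at h; exact h
        obtain ⟨x, hx⟩ := ih v h' (by simp)
        refine ⟨x, ?_⟩
        simp only [List.tail_cons, List.zip_cons_cons, List.mem_cons] at hx ⊢
        tauto

lemma exists_head_pair (l : List V) (u : V) (h : l.head? = some u) (hl : 2 ≤ l.length) :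
    ∃ b, (u, b) ∈ l.zip l.tail := by
  match l, hl with
  | a :: b :: s, _ =>
    simp only [List.head?_cons, Option.some.injEq] at h
    subst h
    exact ⟨b, by simp⟩

lemma pathStrength_le {μ : V → V → ℝ} {l : List V} {p : V × V}
    (hp : p ∈ l.zip l.tail) : pathStrength μ l ≤ μ p.1 p.2 :=
  foldr_min_le_mem (List.mem_map_of_mem hp)

noncomputable def exG : FuzzyGraph (Fin 3) where
  sigma := fun _ => 1
  mu := fun i j => if i = j then 0 else if (i = 0 ∧ j = 2) ∨ (i = 2 ∧ j = 0) then 1 else 1/2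
  sigma_nonneg := fun _ => zero_le_one
  sigma_le_one := fun _ => le_refl 1
  mu_nonneg := by intro u v; fin_cases u <;> fin_cases v <;> norm_num [Fin.ext_iff]
  mu_symm := by intro u v; fin_cases u <;> fin_cases v <;> norm_num [Fin.ext_iff]
  mu_le := by intro u v; fin_cases u <;> fin_cases v <;> norm_num [Fin.ext_iff]

lemma pathStrength_le_one (μ : V → V → ℝ) (l : List V) : pathStrength μ l ≤ 1 :=
  foldr_min_le_one _

lemma connSS_singleton (μ : V → V → ℝ) (a b : V) :
    connSS μ {a} {b} = conn μ a b := by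
  have h : {s | ∃ u ∈ ({a} : Set V), ∃ v ∈ ({b} : Set V), conn μ u v = s}
      = {conn μ a b} := by
    ext s; simp [eq_comm]
  rw [connSS, h, csSup_singleton]

lemma exG_conn01 : conn exG.mu 0 1 = 1/2 := by
  apply IsGreatest.csSup_eq
  constructor
  · refine ⟨[0, 1], ⟨?_, rfl, rfl, by norm_num⟩, ?_⟩
    · norm_num +decide [exG, List.Chain']
    · norm_num +decide [pathStrength, exG, min_def]
  · rintro s ⟨l, ⟨hc, hh, hl, hlen⟩, rfl⟩
    obtain ⟨a, hp⟩ := exists_last_pair l 1 hl hlen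
    refine le_trans (pathStrength_le hp) ?_
    fin_cases a <;> norm_num +decide [exG]

lemma exG_conn12 : conn exG.mu 1 2 = 1/2 := by
  apply IsGreatest.csSup_eq
  constructor
  · refine ⟨[1, 2], ⟨?_, rfl, rfl, by norm_num⟩, ?_⟩
    · norm_num +decide [exG, List.Chain']
    · norm_num +decide [pathStrength, exG, min_def]
  · rintro s ⟨l, ⟨hc, hh, hl, hlen⟩, rfl⟩
    obtain ⟨b, hp⟩ := exists_head_pair l 1 hh hlen
    refine le_trans (pathStrength_le hp) ?_
    fin_cases b <;> norm_num +decide [exG]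

lemma exG_conn02 : 1 ≤ conn exG.mu 0 2 := by
  apply le_csSup
  · exact ⟨1, by rintro s ⟨l, _, rfl⟩; exact pathStrength_le_one _ _⟩
  · refine ⟨[0, 2], ⟨?_, rfl, rfl, by norm_num⟩, ?_⟩
    · norm_num +decide [exG, List.Chain']
    · norm_num +decide [pathStrength, exG, min_def]

/-- Fuzzy subgraph connectivity need not be transitive. -/
theorem fsc_not_transitive :
    ∃ (V : Type) (_ : Fintype V) (G : FuzzyGraph V) (S1 S2 S3 : Set V) (t : ℝ),
      S1.Nonempty ∧ S2.Nonempty ∧ S3.Nonempty ∧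
      Disjoint S1 S2 ∧ Disjoint S2 S3 ∧ Disjoint S1 S3 ∧
      S1 ≠ Set.univ ∧ S2 ≠ Set.univ ∧ S3 ≠ Set.univ ∧
      connSS G.mu S1 S2 = t ∧ connSS G.mu S2 S3 = t ∧ connSS G.mu S1 S3 ≠ t := by
  refine ⟨Fin 3, inferInstance, exG, {0}, {1}, {2}, 1/2, ⟨0, rfl⟩, ⟨1, rfl⟩, ⟨2, rfl⟩,
    ?_, ?_, ?_, ?_, ?_, ?_, ?_, ?_, ?_⟩
  · simp [Set.disjoint_singleton]
  · simp [Set.disjoint_singleton]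
  · simp [Set.disjoint_singleton]
  · intro h; have := h ▸ Set.mem_univ (1 : Fin 3); simp at this
  · intro h; have := h ▸ Set.mem_univ (0 : Fin 3); simp at this
  · intro h; have := h ▸ Set.mem_univ (0 : Fin 3); simp at this
  · rw [connSS_singleton, exG_conn01]
  · rw [connSS_singleton, exG_conn12]
  · rw [connSS_singleton]
    intro h
    have := exG_conn02
    rw [h] at this
    norm_num at this
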